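/- Let D be a connected oriented graph with vertex set {1,...,n}. Then the set of D-indecomposable points in ℝP_+^{n-1} consists exactly of the points [u_I] = [n·Σ_{i∈I} f_i − |I|·Σ_{i=1}^n f_i], where I is a nonempty proper subset of {1,...,n} such that the induced subgraphs of D on I and on {1,...,n}\I are both connected. -/

import Mathlib

open scoped Classical

noncomputable section

/-- The standard inner product on `ℝ^n`. -/
def dotR {n : ℕ} (u v : Fin n → ℝ) : ℝ := ∑ i, u i * v i

/-- `[u] = [u']` : positive equivalence of nonzero vectors (`u' = r • u` with `r > 0`). -/
def PosEq {n : ℕ} (u u' : Fin n → ℝ) : Prop := ∃ r : ℝ, 0 < r ∧ u' = r • u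

/-- `u` is decomposable with respect to the set of vectors `S`. -/
def Decomp {n : ℕ} (S : Set (Fin n → ℝ)) (u : Fin n → ℝ) : Prop :=
  ∃ u' u'' : Fin n → ℝ, u' ≠ 0 ∧ u'' ≠ 0 ∧
    u' ∈ Submodule.span ℝ S ∧ u'' ∈ Submodule.span ℝ S ∧
    u = u' + u'' ∧ ¬ PosEq u u' ∧ ¬ PosEq u u'' ∧
    ∀ x ∈ S, 0 ≤ dotR u' x * dotR u'' x

/-- `u` is indecomposable with respect to the set of vectors `S`. -/
def Indecomp {n : ℕ} (S : Set (Fin n → ℝ)) (u : Fin n → ℝ) : Prop :=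
  u ≠ 0 ∧ u ∈ Submodule.span ℝ S ∧ ¬ Decomp S u

/-- The column `v(e) = f_i - f_j` of the directed incidence matrix corresponding to an
arc `e = (i → j)`. -/
def arcVec {n : ℕ} (i j : Fin n) : Fin n → ℝ := fun k =>
  (if k = i then 1 else 0) - (if k = j then 1 else 0)

/-- The vector `u_I = n ∑_{i∈I} f_i - |I| ∑_{i=1}^n f_i`. -/
def uI {n : ℕ} (I : Finset (Fin n)) : Fin n → ℝ := fun k =>
  (n : ℝ) * (if k ∈ I then 1 else 0) - (I.card : ℝ)

/-! ### Auxiliary lemmas -/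

lemma dotR_arcVec {n : ℕ} (w : Fin n → ℝ) (i j : Fin n) :
    dotR w (arcVec i j) = w i - w j := by
  simp [dotR, arcVec, mul_sub, Finset.sum_sub_distrib, mul_ite, mul_one, mul_zero]

lemma sum_uI {n : ℕ} (I : Finset (Fin n)) : ∑ k, uI I k = 0 := by
  simp [uI, Finset.sum_sub_distrib, Finset.mul_sum, Finset.sum_ite_mem]
  ring

/-- Summation as a linear map. -/
def sumL (n : ℕ) : (Fin n → ℝ) →ₗ[ℝ] ℝ where
  toFun u := ∑ i, u i
  map_add' u v := by simp [Finset.sum_add_distrib]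
  map_smul' c u := by simp [Finset.mul_sum]

lemma arcVec_self {n : ℕ} (x : Fin n) : arcVec x x = (0 : Fin n → ℝ) := by
  funext k; simp [arcVec]

lemma arcVec_split {n : ℕ} (a b c : Fin n) : arcVec a c = arcVec a b + arcVec b c := by
  funext k; simp only [arcVec, Pi.add_apply]; ring

lemma arcVec_rev {n : ℕ} (a b : Fin n) : arcVec a b = (-1 : ℝ) • arcVec b a := by
  funext k; simp only [arcVec, Pi.smul_apply, smul_eq_mul]; ring

lemma arcVec_mem_span {n : ℕ} (D : Fin n → Fin n → Prop) {i j : Fin n}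
    (h : (SimpleGraph.fromRel D).Reachable i j) :
    arcVec i j ∈ Submodule.span ℝ {x : Fin n → ℝ | ∃ i j, D i j ∧ x = arcVec i j} := by
  obtain ⟨w⟩ := h
  induction w with
  | nil => rw [arcVec_self]; exact Submodule.zero_mem _
  | @cons a b c hab p ih =>
    rw [arcVec_split a b c]
    refine Submodule.add_mem _ ?_ ih
    rcases hab with ⟨hne, hD | hD⟩
    · exact Submodule.subset_span ⟨a, b, hD, rfl⟩
    · rw [arcVec_rev]
      exact Submodule.smul_mem _ _ (Submodule.subset_span ⟨b, a, hD, rfl⟩)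

lemma span_eq {n : ℕ} (D : Fin n → Fin n → Prop)
    (hconn : (SimpleGraph.fromRel D).Connected) :
    Submodule.span ℝ {x : Fin n → ℝ | ∃ i j, D i j ∧ x = arcVec i j}
      = LinearMap.ker (sumL n) := by
  haveI := hconn.nonempty
  apply le_antisymm
  · rw [Submodule.span_le]
    rintro x ⟨i, j, hD, rfl⟩
    simp only [SetLike.mem_coe, LinearMap.mem_ker, sumL, LinearMap.coe_mk, AddHom.coe_mk]
    simp [arcVec, Finset.sum_sub_distrib]
  · intro u hu
    have hsum : ∑ i, u i = 0 := hu
    obtain ⟨v0⟩ := ‹Nonempty (Fin n)›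
    have hrep : u = ∑ i, u i • arcVec i v0 := by
      funext k
      simp only [Finset.sum_apply, Pi.smul_apply, arcVec, smul_eq_mul, mul_sub,
        Finset.sum_sub_distrib, mul_ite, mul_one, mul_zero]
      rw [Finset.sum_ite_eq Finset.univ k u]
      by_cases hk : k = v0 <;> simp [hk, hsum]
    rw [hrep]
    exact Submodule.sum_mem _ fun i _ =>
      Submodule.smul_mem _ _ (arcVec_mem_span D (hconn.preconnected i v0))

lemma mem_span_iff {n : ℕ} (D : Fin n → Fin n → Prop)
    (hconn : (SimpleGraph.fromRel D).Connected) (u : Fin n → ℝ) :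
    u ∈ Submodule.span ℝ {x : Fin n → ℝ | ∃ i j, D i j ∧ x = arcVec i j}
      ↔ ∑ i, u i = 0 := by
  rw [span_eq D hconn, LinearMap.mem_ker]; exact Iff.rfl

lemma uI_mem_span {n : ℕ} (D : Fin n → Fin n → Prop)
    (hconn : (SimpleGraph.fromRel D).Connected) (I : Finset (Fin n)) :
    uI I ∈ Submodule.span ℝ {x : Fin n → ℝ | ∃ i j, D i j ∧ x = arcVec i j} :=
  (mem_span_iff D hconn _).2 (sum_uI I)

lemma uI_compl {n : ℕ} (I : Finset (Fin n)) : uI Iᶜ = - uI I := by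
  have hcard : (Iᶜ.card : ℝ) = (n : ℝ) - I.card := by
    rw [Finset.card_compl, Fintype.card_fin]
    have h1 : I.card ≤ n := by simpa using Finset.card_le_univ I
    rw [Nat.cast_sub h1]
  funext k
  by_cases hk : k ∈ I <;>
    simp only [uI, Pi.neg_apply, Finset.mem_compl, hk, if_pos, if_neg, if_true, if_false,
      not_true, not_false_iff, hcard] <;> ring

lemma dotR_smul {n : ℕ} (c : ℝ) (u v : Fin n → ℝ) : dotR (c • u) v = c * dotR u v := by
  simp [dotR, Finset.mul_sum, mul_assoc]

lemma posEq_smul_iff {n : ℕ} {c : ℝ} (hc : c ≠ 0) (u u' : Fin n → ℝ) :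
    PosEq (c • u) (c • u') ↔ PosEq u u' := by
  constructor
  · rintro ⟨r, hr, h⟩
    refine ⟨r, hr, ?_⟩
    have h2 : u' = (c⁻¹ * (r * c)) • u := by
      have := congrArg (fun w => c⁻¹ • w) h
      simpa [smul_smul, inv_mul_cancel₀ hc] using this
    rwa [show c⁻¹ * (r * c) = r by field_simp] at h2
  · rintro ⟨r, hr, h⟩
    exact ⟨r, hr, by rw [h, smul_comm]⟩

lemma decomp_smul {n : ℕ} {S : Set (Fin n → ℝ)} {u : Fin n → ℝ} {c : ℝ} (hc : c ≠ 0)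
    (h : Decomp S u) : Decomp S (c • u) := by
  obtain ⟨u', u'', h1, h2, hm1, hm2, heq, hp1, hp2, hs⟩ := h
  refine ⟨c • u', c • u'', by simpa using smul_ne_zero hc h1, by simpa using smul_ne_zero hc h2,
    Submodule.smul_mem _ _ hm1, Submodule.smul_mem _ _ hm2,
    by rw [heq, smul_add], ?_, ?_, ?_⟩
  · rw [posEq_smul_iff hc]; exact hp1
  · rw [posEq_smul_iff hc]; exact hp2
  · intro x hx
    rw [dotR_smul, dotR_smul]
    have := hs x hx
    nlinarith [sq_nonneg c]

/-- If an induced subgraph on a nonempty finset is not connected, we can split the finset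
into two nonempty parts with no edges between them. -/
lemma not_conn_split {n : ℕ} {G : SimpleGraph (Fin n)} {I : Finset (Fin n)}
    (hI : I.Nonempty) (h : ¬ (G.induce (I : Set (Fin n))).Connected) :
    ∃ I1 : Finset (Fin n), I1 ⊆ I ∧ I1.Nonempty ∧ (I \ I1).Nonempty ∧
      ∀ i ∈ I1, ∀ j ∈ I \ I1, ¬ G.Adj i j := by
  haveI : Nonempty (I : Set (Fin n)) := ⟨⟨hI.choose, hI.choose_spec⟩⟩
  rw [SimpleGraph.connected_iff] at h
  push_neg at h
  have hpc : ¬ (G.induce (I : Set (Fin n))).Preconnected := fun hp => not_isEmpty_of_nonempty _ (h hp)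
  rw [SimpleGraph.Preconnected] at hpc
  push_neg at hpc
  obtain ⟨x, y, hxy⟩ := hpc
  refine ⟨I.filter (fun z => ∃ hz : z ∈ (I : Set (Fin n)),
      (G.induce (I : Set (Fin n))).Reachable x ⟨z, hz⟩), Finset.filter_subset _ _, ⟨x.1, ?_⟩,
      ⟨y.1, ?_⟩, ?_⟩
  · exact Finset.mem_filter.2 ⟨by exact_mod_cast x.2, x.2, by rfl⟩
  · refine Finset.mem_sdiff.2 ⟨by exact_mod_cast y.2, fun hy => ?_⟩
    obtain ⟨-, hz, hr⟩ := Finset.mem_filter.1 hy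
    exact hxy (by convert hr)
  · intro i hi j hj hadj
    obtain ⟨hiI, hzi, hri⟩ := Finset.mem_filter.1 hi
    obtain ⟨hjI, hjn⟩ := Finset.mem_sdiff.1 hj
    refine hjn (Finset.mem_filter.2 ⟨hjI, by exact_mod_cast hjI, ?_⟩)
    refine hri.trans (SimpleGraph.Adj.reachable ?_)
    exact hadj

/-- A function constant along edges of an induced connected subgraph is constant on it. -/
lemma const_of_conn {n : ℕ} {G : SimpleGraph (Fin n)} {I : Set (Fin n)}
    (h : (G.induce I).Preconnected) (f : Fin n → ℝ)
    (hf : ∀ i j, i ∈ I → j ∈ I → G.Adj i j → f i = f j) :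
    ∀ i ∈ I, ∀ j ∈ I, f i = f j := by
  have key : ∀ (x y : I), (G.induce I).Reachable x y → f x = f y := by
    rintro x y ⟨w⟩
    induction w with
    | nil => rfl
    | @cons a b c hab p ih =>
      exact (hf a b a.2 b.2 hab).trans ih
  intro i hi j hj
  exact key ⟨i, hi⟩ ⟨j, hj⟩ (h _ _)

/-- A walk from inside `I` to outside `I` crosses the boundary. -/
lemma cross_of_walk {n : ℕ} {G : SimpleGraph (Fin n)} {I : Finset (Fin n)} :
    ∀ {x y : Fin n}, G.Walk x y → x ∈ I → y ∉ I →
      ∃ i ∈ I, ∃ j, j ∉ I ∧ G.Adj i j := by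
  intro x y w
  induction w with
  | nil => intro h1 h2; exact absurd h1 h2
  | @cons a b c hab p ih =>
    intro ha hc
    by_cases hb : b ∈ I
    · exact ih hb hc
    · exact ⟨a, ha, b, hb, hab⟩

lemma disc_decomp {n : ℕ} (D : Fin n → Fin n → Prop)
    (hconn : (SimpleGraph.fromRel D).Connected) {I I1 : Finset (Fin n)}
    (hsub : I1 ⊆ I) (h1 : I1.Nonempty) (h2 : (I \ I1).Nonempty)
    (hno : ∀ i ∈ I1, ∀ j ∈ I \ I1, ¬ (SimpleGraph.fromRel D).Adj i j) :
    Decomp {x : Fin n → ℝ | ∃ i j, D i j ∧ x = arcVec i j} (uI I) := by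
  haveI := hconn.nonempty
  obtain ⟨i0, hi0⟩ := h1
  have hn : 0 < (n : ℝ) := by exact_mod_cast i0.pos
  obtain ⟨j0, hj0m⟩ := h2
  obtain ⟨hj0I, hj0⟩ := Finset.mem_sdiff.1 hj0m
  have hi0I : i0 ∈ I := hsub hi0
  set u' : Fin n → ℝ := (1/2 : ℝ) • uI I1 with hu'
  set u'' : Fin n → ℝ := uI I - u' with hu''
  have hd' : u' i0 - u' j0 = n / 2 := by
    simp only [hu', Pi.smul_apply, smul_eq_mul, uI, hi0, hj0, if_pos, if_neg, if_true, if_false]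
    ring
  have hd'' : u'' i0 - u'' j0 = -(n / 2) := by
    have : uI I i0 - uI I j0 = 0 := by simp [uI, hi0I, hj0I]
    simp only [hu'', Pi.sub_apply]
    nlinarith [hd']
  refine ⟨u', u'', ?_, ?_, ?_, ?_, ?_, ?_, ?_, ?_⟩
  · intro h0
    rw [h0] at hd'; simp at hd'; linarith
  · intro h0
    rw [h0] at hd''; simp at hd''; simp [hd''] at hn
  · exact Submodule.smul_mem _ _ (uI_mem_span D hconn I1)
  · exact Submodule.sub_mem _ (uI_mem_span D hconn I)
      (Submodule.smul_mem _ _ (uI_mem_span D hconn I1))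
  · funext k; simp [hu'']
  · rintro ⟨r, hr, heq⟩
    have : u' i0 - u' j0 = r * (uI I i0 - uI I j0) := by rw [heq]; simp; ring
    rw [hd'] at this
    simp [uI, hi0I, hj0I] at this
    simp [this] at hn
  · rintro ⟨r, hr, heq⟩
    have : u'' i0 - u'' j0 = r * (uI I i0 - uI I j0) := by rw [heq]; simp; ring
    rw [hd''] at this
    simp [uI, hi0I, hj0I] at this
    simp [this] at hn
  · rintro x ⟨i, j, hD, rfl⟩
    rw [dotR_arcVec, dotR_arcVec]
    by_cases hi : i ∈ I1 <;> by_cases hj : j ∈ I1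
    · have : u' i - u' j = 0 := by simp [hu', uI, hi, hj]
      rw [this]; simp
    · have hij : i ≠ j := fun h => hj (h ▸ hi)
      have hjI : j ∉ I := by
        intro hjI
        exact hno i hi j (Finset.mem_sdiff.2 ⟨hjI, hj⟩) ⟨hij, Or.inl hD⟩
      have e1 : u' i - u' j = n / 2 := by
        simp only [hu', Pi.smul_apply, smul_eq_mul, uI, hi, hj, if_pos, if_neg, if_true, if_false]
        ring
      have e0 : uI I i - uI I j = (n : ℝ) := by
        simp only [uI, if_pos (hsub hi), if_neg hjI]; ring
      have e2 : u'' i - u'' j = n / 2 := by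
        simp only [hu'', Pi.sub_apply]; linarith [e0, e1]
      rw [e1, e2]; positivity
    · have hij : i ≠ j := fun h => hi (h ▸ hj)
      have hiI : i ∉ I := by
        intro hiI
        exact hno j hj i (Finset.mem_sdiff.2 ⟨hiI, hi⟩) ⟨hij.symm, Or.inr hD⟩
      have e1 : u' i - u' j = -(n / 2) := by
        simp only [hu', Pi.smul_apply, smul_eq_mul, uI, hi, hj, if_pos, if_neg, if_true, if_false]
        ring
      have e0 : uI I i - uI I j = -(n : ℝ) := by
        simp only [uI, if_neg hiI, if_pos (hsub hj)]; ring
      have e2 : u'' i - u'' j = -(n / 2) := by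
        simp only [hu'', Pi.sub_apply]; linarith [e0, e1]
      rw [e1, e2]
      nlinarith
    · have : u' i - u' j = 0 := by simp [hu', uI, hi, hj]
      rw [this]; simp
set_option maxHeartbeats 4000000 in
theorem oriented_D_indecomposable {n : ℕ} (D : Fin n → Fin n → Prop)
    (hloop : ∀ i, ¬ D i i) (hmult : ∀ i j, D i j → ¬ D j i)
    (hconn : (SimpleGraph.fromRel D).Connected) :
    ∀ u : Fin n → ℝ,
      Indecomp {x | ∃ i j, D i j ∧ x = arcVec i j} u ↔
        ∃ I : Finset (Fin n), I.Nonempty ∧ I ≠ Finset.univ ∧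
          ((SimpleGraph.fromRel D).induce (I : Set (Fin n))).Connected ∧
          ((SimpleGraph.fromRel D).induce ((I : Set (Fin n))ᶜ)).Connected ∧
          PosEq (uI I) u := by
  haveI := hconn.nonempty
  have hn0 : 0 < n := Fin.pos (Classical.arbitrary (Fin n))
  have hnR : 0 < (n : ℝ) := by exact_mod_cast hn0
  intro u
  constructor
  · rintro ⟨hne, hmem, hnd⟩
    have hsum : ∑ i, u i = 0 := (mem_span_iff D hconn u).1 hmem
    obtain ⟨imin, -, hmin⟩ := Finset.exists_min_image Finset.univ u ⟨Classical.arbitrary _, Finset.mem_univ _⟩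
    obtain ⟨imax, -, hmax⟩ := Finset.exists_max_image Finset.univ u ⟨Classical.arbitrary _, Finset.mem_univ _⟩
    have hminle : ∀ k, u imin ≤ u k := fun k => hmin k (Finset.mem_univ k)
    have hmaxle : ∀ k, u k ≤ u imax := fun k => hmax k (Finset.mem_univ k)
    have hab : u imin < u imax := by
      rcases lt_or_ge (u imin) (u imax) with h | h
      · exact h
      · exfalso
        have hconst : ∀ k, u k = u imin := fun k => le_antisymm ((hmaxle k).trans h) (hminle k)
        have : ∑ i, u i = (n : ℝ) * u imin := by
          rw [Finset.sum_congr rfl (fun k _ => hconst k), Finset.sum_const, Finset.card_univ,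
            Fintype.card_fin, nsmul_eq_mul]
        rw [hsum] at this
        have h0 : u imin = 0 := by
          rcases mul_eq_zero.1 this.symm with h' | h'
          · exact absurd h' hnR.ne'
          · exact h'
        exact hne (funext fun k => by rw [hconst k, h0]; rfl)
    -- u takes only the two values u imin and u imax
    have h2v : ∀ k, u k = u imin ∨ u k = u imax := by
      intro j
      by_contra hj
      push_neg at hj
      obtain ⟨hja, hjb⟩ := hj
      have hj1 : u imin < u j := lt_of_le_of_ne (hminle j) (Ne.symm hja)
      have hj2 : u j < u imax := lt_of_le_of_ne (hmaxle j) hjb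
      apply hnd
      set t := u j with ht
      set s1 : ℝ := (∑ i, min (u i) t) / n with hs1
      set s2 : ℝ := (∑ i, max (u i) t) / n with hs2
      set u' : Fin n → ℝ := fun k => min (u k) t - s1 with hu'
      set u'' : Fin n → ℝ := fun k => max (u k) t - s2 with hu''
      have hkey : (∑ i, min (u i) t) + (∑ i, max (u i) t) = (n : ℝ) * t := by
        rw [← Finset.sum_add_distrib,
          Finset.sum_congr rfl (fun i _ => min_add_max (u i) t), Finset.sum_add_distrib,
          hsum, Finset.sum_const, Finset.card_univ, Fintype.card_fin, nsmul_eq_mul]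
        ring
      have hs12 : s1 + s2 = t := by
        rw [hs1, hs2, ← add_div, hkey]
        field_simp
      have hsu' : ∑ k, u' k = 0 := by
        simp only [hu']
        rw [Finset.sum_sub_distrib, Finset.sum_const, Finset.card_univ, Fintype.card_fin,
          nsmul_eq_mul, hs1]
        field_simp
        ring
      have hsu'' : ∑ k, u'' k = 0 := by
        simp only [hu'']
        rw [Finset.sum_sub_distrib, Finset.sum_const, Finset.card_univ, Fintype.card_fin,
          nsmul_eq_mul, hs2]
        field_simp
        ring
      have hv1 : u' imin - u' j = u imin - t := by
        simp only [hu']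
        rw [min_eq_left hj1.le, min_self]
        ring
      have hv2 : u'' imin - u'' j = 0 := by
        simp only [hu'']
        rw [max_eq_right hj1.le, max_self]
        ring
      have hv3 : u' j - u' imax = 0 := by
        simp only [hu']
        rw [min_eq_right hj2.le, min_self]
        ring
      have hv4 : u'' j - u'' imax = t - u imax := by
        simp only [hu'']
        rw [max_eq_left hj2.le, max_self]
        ring
      refine ⟨u', u'', ?_, ?_, (mem_span_iff D hconn u').2 hsu',
        (mem_span_iff D hconn u'').2 hsu'', ?_, ?_, ?_, ?_⟩
      · intro h0; rw [h0] at hv1; simp at hv1; linarith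
      · intro h0; rw [h0] at hv4; simp at hv4; linarith
      · funext k
        simp only [Pi.add_apply, hu', hu'']
        have := min_add_max (u k) t
        linarith [hs12]
      · rintro ⟨c, hc, hcu⟩
        have : u' j - u' imax = c * (u j - u imax) := by rw [hcu]; simp; ring
        rw [hv3] at this
        nlinarith
      · rintro ⟨c, hc, hcu⟩
        have : u'' imin - u'' j = c * (u imin - u j) := by rw [hcu]; simp; ring
        rw [hv2] at this
        nlinarith
      · rintro x ⟨i, i', hD, rfl⟩
        rw [dotR_arcVec, dotR_arcVec]
        have l1 : u' i - u' i' = min (u i) t - min (u i') t := by simp only [hu']; ring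
        have l2 : u'' i - u'' i' = max (u i) t - max (u i') t := by simp only [hu'']; ring
        rw [l1, l2]
        rcases le_total (u i) (u i') with h | h
        · have m1 : min (u i) t ≤ min (u i') t := min_le_min h le_rfl
          have m2 : max (u i) t ≤ max (u i') t := max_le_max h le_rfl
          nlinarith
        · have m1 : min (u i') t ≤ min (u i) t := min_le_min h le_rfl
          have m2 : max (u i') t ≤ max (u i) t := max_le_max h le_rfl
          nlinarith
    -- the level set of the max value
    set I : Finset (Fin n) := Finset.univ.filter (fun k => u k = u imax) with hI
    have hmemI : ∀ k, k ∈ I ↔ u k = u imax := by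
      intro k; rw [hI]; simp
    have hImax : imax ∈ I := (hmemI imax).2 rfl
    have hIne : I.Nonempty := ⟨imax, hImax⟩
    have hIuniv : I ≠ Finset.univ := by
      intro h
      have := (hmemI imin).1 (h ▸ Finset.mem_univ imin)
      exact absurd this (ne_of_lt hab)
    have hm1 : 0 < I.card := Finset.card_pos.2 hIne
    have hmn : I.card < n := by
      have := Finset.card_lt_card (Finset.ssubset_univ_iff.2 hIuniv)
      simpa using this
    have hm1R : (1 : ℝ) ≤ I.card := by exact_mod_cast hm1
    have hmnR : (I.card : ℝ) + 1 ≤ n := by exact_mod_cast hmn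
    have huval : ∀ k, u k = if k ∈ I then u imax else u imin := by
      intro k
      by_cases hk : k ∈ I
      · rw [if_pos hk]; exact (hmemI k).1 hk
      · rw [if_neg hk]
        rcases h2v k with h | h
        · exact h
        · exact absurd ((hmemI k).2 h) hk
    have hsum' : (I.card : ℝ) * u imax + ((n : ℝ) - I.card) * u imin = 0 := by
      have e : ∑ k, u k = ∑ k, (if k ∈ I then u imax else u imin) :=
        Finset.sum_congr rfl (fun k _ => huval k)
      rw [hsum] at e
      rw [Finset.sum_ite, Finset.sum_const, Finset.sum_const] at e
      have c1 : Finset.univ.filter (fun k => k ∈ I) = I := by ext k; simp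
      have c2 : (Finset.univ.filter (fun k => ¬ k ∈ I)).card = n - I.card := by
        have : Finset.univ.filter (fun k => ¬ k ∈ I) = Iᶜ := by
          ext k; simp [Finset.mem_compl]
        rw [this, Finset.card_compl, Fintype.card_fin]
      rw [c1, c2, nsmul_eq_mul, nsmul_eq_mul, Nat.cast_sub hmn.le] at e
      linarith
    have hb : 0 < u imax := by nlinarith
    set r : ℝ := u imax / ((n : ℝ) - I.card) with hrdef
    have hnm : 0 < (n : ℝ) - I.card := by linarith
    have hr : 0 < r := div_pos hb hnm
    have hru : u = r • uI I := by
      funext k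
      simp only [Pi.smul_apply, smul_eq_mul, uI]
      rw [huval k]
      by_cases hk : k ∈ I
      · rw [if_pos hk, if_pos hk, hrdef]
        field_simp
      · rw [if_neg hk, if_neg hk, hrdef]
        field_simp
        nlinarith [hsum']
    refine ⟨I, hIne, hIuniv, ?_, ?_, ⟨r, hr, hru⟩⟩
    · by_contra hcon
      obtain ⟨I1, hsub, hn1, hn2, hno⟩ := not_conn_split hIne hcon
      apply hnd
      rw [hru]
      exact decomp_smul hr.ne' (disc_decomp D hconn hsub hn1 hn2 hno)
    · by_contra hcon
      have hcon' : ¬ ((SimpleGraph.fromRel D).induce ((Iᶜ : Finset (Fin n)) : Set (Fin n))).Connected := by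
        rwa [Finset.coe_compl]
      have hIcne : (Iᶜ : Finset (Fin n)).Nonempty := ⟨imin, by
        rw [Finset.mem_compl]
        intro h
        exact absurd ((hmemI imin).1 h) (ne_of_lt hab)⟩
      obtain ⟨J1, hsub, hn1, hn2, hno⟩ := not_conn_split hIcne hcon'
      have hd : Decomp {x | ∃ i j, D i j ∧ x = arcVec i j} (uI Iᶜ) :=
        disc_decomp D hconn hsub hn1 hn2 hno
      have hneg : uI I = (-1 : ℝ) • uI Iᶜ := by
        rw [uI_compl]; funext k; simp
      have hu2 : u = (-r) • uI Iᶜ := by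
        rw [hru, hneg, smul_smul]; norm_num
      apply hnd
      rw [hu2]
      exact decomp_smul (by intro h; rw [neg_eq_zero] at h; exact hr.ne' h) hd
  · rintro ⟨I, hIne, hIuniv, hcI, hcIc, r, hr, hru⟩
    have hm1 : 0 < I.card := Finset.card_pos.2 hIne
    have hmn : I.card < n := by
      have := Finset.card_lt_card (Finset.ssubset_univ_iff.2 hIuniv)
      simpa using this
    have hm1R : (1 : ℝ) ≤ I.card := by exact_mod_cast hm1
    have hmnR : (I.card : ℝ) + 1 ≤ n := by exact_mod_cast hmn
    refine ⟨?_, by rw [hru]; exact Submodule.smul_mem _ _ (uI_mem_span D hconn I), ?_⟩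
    · obtain ⟨i0, hi0⟩ := hIne
      intro h0
      have : u i0 = 0 := congrFun h0 i0
      rw [hru] at this
      simp only [Pi.smul_apply, smul_eq_mul, uI, hi0, if_pos, if_true] at this
      nlinarith
    · rintro ⟨u', u'', h1, h2, hm1', hm2', heq, hp1, hp2, hs⟩
      have hsign : ∀ i j, D i j → 0 ≤ (u' i - u' j) * (u'' i - u'' j) := by
        intro i j hD
        have := hs (arcVec i j) ⟨i, j, hD, rfl⟩
        rwa [dotR_arcVec, dotR_arcVec] at this
      have hflat : ∀ i j, (SimpleGraph.fromRel D).Adj i j → u i = u j → u' i = u' j := by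
        intro i j hadj huij
        have ei : u i = u' i + u'' i := congrFun heq i
        have ej : u j = u' j + u'' j := congrFun heq j
        rcases hadj.2 with hD | hD
        · have := hsign i j hD; nlinarith
        · have := hsign j i hD; nlinarith
      have huval : ∀ k, u k = r * ((n : ℝ) * (if k ∈ I then 1 else 0) - I.card) := by
        intro k; rw [hru]; simp [uI]
      have hconstI : ∀ i ∈ I, ∀ j ∈ I, u' i = u' j := by
        have := const_of_conn hcI.preconnected u' (fun i j hi hj hadj =>
          hflat i j hadj (by rw [huval i, huval j]; simp [Finset.mem_coe.1 hi, Finset.mem_coe.1 hj]))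
        intro i hi j hj
        exact this i (by exact_mod_cast hi) j (by exact_mod_cast hj)
      have hconstIc : ∀ i ∉ I, ∀ j ∉ I, u' i = u' j := by
        have := const_of_conn hcIc.preconnected u' (fun i j hi hj hadj =>
          hflat i j hadj (by
            have hi' : i ∉ I := by simpa using hi
            have hj' : j ∉ I := by simpa using hj
            rw [huval i, huval j]; simp [hi', hj']))
        intro i hi j hj
        exact this i (by simpa using hi) j (by simpa using hj)
      -- a crossing edge
      obtain ⟨i1, hi1⟩ := hIne
      obtain ⟨j1, hj1⟩ : ∃ x, x ∉ I := by
        by_contra h; push_neg at h; exact hIuniv (Finset.eq_univ_iff_forall.2 h)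
      obtain ⟨i0, hi0, j0, hj0, hadj⟩ :=
        cross_of_walk (hconn.preconnected i1 j1).some hi1 hj1
      obtain ⟨α, hA⟩ : ∃ a, ∀ k ∈ I, u' k = a :=
        ⟨u' i0, fun k hk => hconstI k hk i0 hi0⟩
      obtain ⟨β, hB⟩ : ∃ b, ∀ k, k ∉ I → u' k = b :=
        ⟨u' j0, fun k hk => hconstIc k hk j0 hj0⟩
      have hudiff : u i0 - u j0 = r * n := by
        rw [huval i0, huval j0]; simp [hi0, hj0]; ring
      have hAi0 : u' i0 = α := hA i0 hi0
      have hBj0 : u' j0 = β := hB j0 hj0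
      have e'' : u'' i0 - u'' j0 = r * n - (α - β) := by
        have ei : u i0 = u' i0 + u'' i0 := congrFun heq i0
        have ej : u j0 = u' j0 + u'' j0 := congrFun heq j0
        linarith [hudiff]
      have hP : 0 ≤ (α - β) * (r * n - (α - β)) := by
        rcases hadj.2 with hD | hD
        · have := hsign i0 j0 hD; rw [e'', hAi0, hBj0] at this
          linarith [this]
        · have := hsign j0 i0 hD
          have h2' : u'' j0 - u'' i0 = -(r * n - (α - β)) := by linarith [e'']
          rw [h2', hAi0, hBj0] at this
          nlinarith [this]
      -- sums
      have hsu' : ∑ k, u' k = 0 := (mem_span_iff D hconn u').1 hm1'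
      have hsplitsum : ∀ (f : Fin n → ℝ) (va vb : ℝ), (∀ k ∈ I, f k = va) →
          (∀ k, k ∉ I → f k = vb) → (I.card : ℝ) * va + ((n : ℝ) - I.card) * vb = ∑ k, f k := by
        intro f va vb hva hvb
        rw [← Finset.sum_add_sum_compl I f]
        have e1 : ∑ k ∈ I, f k = (I.card : ℝ) * va :=
          by rw [Finset.sum_congr rfl hva, Finset.sum_const, nsmul_eq_mul]
        have e2 : ∑ k ∈ Iᶜ, f k = ((n : ℝ) - I.card) * vb := by
          rw [Finset.sum_congr rfl (fun k hk => hvb k (Finset.mem_compl.1 hk)),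
            Finset.sum_const, nsmul_eq_mul, Finset.card_compl, Fintype.card_fin,
            Nat.cast_sub hmn.le]
        rw [e1, e2]
      have hsum' : (I.card : ℝ) * α + ((n : ℝ) - I.card) * β = 0 := by
        rw [hsplitsum u' α β hA hB]; exact hsu'
      have hpne : α - β ≠ 0 := by
        intro hp0
        have hαβ : α = β := by linarith
        have hα0 : α = 0 := by
          rw [hαβ] at hsum'
          have hnz : (n : ℝ) * β = 0 := by linarith
          rcases mul_eq_zero.1 hnz with h | h
          · exact absurd h hnR.ne'
          · rw [hαβ]; exact h
        apply h1
        funext k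
        by_cases hk : k ∈ I
        · rw [hA k hk, hα0]; rfl
        · rw [hB k hk, ← hαβ, hα0]; rfl
      have hqne : r * n - (α - β) ≠ 0 := by
        intro hq0
        have hA'' : ∀ k ∈ I, u'' k = u i0 - α := by
          intro k hk
          have ek : u k = u' k + u'' k := congrFun heq k
          have : u k = u i0 := by rw [huval k, huval i0]; simp [hk, hi0]
          rw [hA k hk] at ek; linarith
        have hB'' : ∀ k, k ∉ I → u'' k = u j0 - β := by
          intro k hk
          have ek : u k = u' k + u'' k := congrFun heq k
          have : u k = u j0 := by rw [huval k, huval j0]; simp [hk, hj0]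
          rw [hB k hk] at ek; linarith
        have heqv : u i0 - α = u j0 - β := by
          have := hudiff; linarith
        have hsu'' : ∑ k, u'' k = 0 := (mem_span_iff D hconn u'').1 hm2'
        have hsum'' : (I.card : ℝ) * (u i0 - α) + ((n : ℝ) - I.card) * (u i0 - α) = 0 := by
          rw [hsplitsum u'' (u i0 - α) (u i0 - α) hA'' (fun k hk => by rw [hB'' k hk, heqv])]
          exact hsu''
        have hnz : (n : ℝ) * (u i0 - α) = 0 := by linarith [hsum'']
        have hv0 : u i0 - α = 0 := by
          rcases mul_eq_zero.1 hnz with h | h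
          · exact absurd h hnR.ne'
          · exact h
        apply h2
        funext k
        by_cases hk : k ∈ I
        · rw [hA'' k hk, hv0]; rfl
        · rw [hB'' k hk, ← heqv, hv0]; rfl
      have hrn : 0 < r * n := by positivity
      have hp0 : 0 < α - β := by
        rcases lt_or_gt_of_ne hpne with h | h
        · nlinarith
        · exact h
      have hval : (n : ℝ) * α = ((n : ℝ) - I.card) * (α - β) := by
        nlinarith [hsum']
      apply hp1
      refine ⟨(α - β) / (r * n), div_pos hp0 hrn, ?_⟩
      funext k
      simp only [Pi.smul_apply, smul_eq_mul]
      rw [huval k]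
      by_cases hk : k ∈ I
      · rw [hA k hk]
        simp only [hk, if_pos, if_true]
        have e : (α - β) / (r * n) * (r * ((n : ℝ) * 1 - I.card))
            = ((n : ℝ) - I.card) * (α - β) / n := by
          field_simp
        rw [e, eq_div_iff hnR.ne']
        linarith [hval]
      · rw [hB k hk]
        simp only [hk, if_neg, if_false]
        have hβv : (n : ℝ) * β = -(I.card : ℝ) * (α - β) := by linarith [hval]
        have e : (α - β) / (r * n) * (r * ((n : ℝ) * 0 - I.card))
            = -(I.card : ℝ) * (α - β) / n := by
          field_simp; ring
        rw [e, eq_div_iff hnR.ne']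
        linarith [hβv]
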